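/- Initial loss-derivative comparison between Kronecker and feed-forward networks: let φ_1, …, φ_K ∈ C¹(ℝ) with K ≥ m. Let the FFN have parameters Θ_FF(0) = (c, V) and the KNN have parameters Θ_K(0) = (c, V, α(0), ω(0)) with α(0) = (1, 0, …, 0) and ω(0) = (1, …, 1), so that u^K(·; Θ_K(0)) = u^FF(·; Θ_FF(0)) and the residual vectors at t = 0 coincide: Res(X)(0) = (u(x_j) − y_j)_{j=1}^m. Let Θ_FF(t), Θ_K(t) solve the respective gradient flows of the square loss. Then at t = 0, d/dt L^K(0) ≤ d/dt L^FF(0) − ‖A(0) · Res(X)(0)‖² ≤ d/dt L^FF(0) ≤ 0, where A(0) is the K×m matrix with entries A_{kj} = Σ_{i=1}^N c_i φ_k(v_iᵀ x̃_j). In particular, if A(0) has full rank m and Res(X)(0) ≠ 0, then d/dt L^K(0) < d/dt L^FF(0). -/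

import Mathlib

open scoped BigOperators

noncomputable section

/-- Parameters `(c, V)` of a two-layer feed-forward network, as a Euclidean space. -/
abbrev FFParams (N d : ℕ) : Type :=
  EuclideanSpace ℝ (Fin N ⊕ Fin N × Fin (d + 1))

/-- Parameters `(c, V, α, ω)` of a two-layer Kronecker network, as a Euclidean space. -/
abbrev KParams (N d K : ℕ) : Type :=
  EuclideanSpace ℝ ((Fin N ⊕ Fin N × Fin (d + 1)) ⊕ (Fin K ⊕ Fin K))

/-- The two-layer feed-forward network `u^FF(x; θ) = Σ_i c_i φ₁(v_iᵀ x̃)`. -/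
def uFF {N d : ℕ} (φ1 : ℝ → ℝ) (θ : FFParams N d) (x : Fin (d + 1) → ℝ) : ℝ :=
  ∑ i, θ (Sum.inl i) * φ1 (∑ j, θ (Sum.inr (i, j)) * x j)

/-- The two-layer Kronecker network `u^K(x; Θ) = Σ_i c_i Σ_k α_k φ_k(ω_k v_iᵀ x̃)`. -/
def uK {N d K : ℕ} (φ : Fin K → ℝ → ℝ) (θ : KParams N d K) (x : Fin (d + 1) → ℝ) : ℝ :=
  ∑ i, θ (Sum.inl (Sum.inl i)) *
    ∑ k, θ (Sum.inr (Sum.inl k)) *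
      φ k (θ (Sum.inr (Sum.inr k)) * ∑ j, θ (Sum.inl (Sum.inr (i, j))) * x j)

/-- The square loss of the feed-forward network. -/
def sqLossFF {N d m : ℕ} (φ1 : ℝ → ℝ) (xt : Fin m → Fin (d + 1) → ℝ) (y : Fin m → ℝ)
    (θ : FFParams N d) : ℝ :=
  (1 / 2 : ℝ) * ∑ j, (uFF φ1 θ (xt j) - y j) ^ 2

/-- The square loss of the Kronecker network. -/
def sqLossK {N d K m : ℕ} (φ : Fin K → ℝ → ℝ) (xt : Fin m → Fin (d + 1) → ℝ)
    (y : Fin m → ℝ) (θ : KParams N d K) : ℝ :=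
  (1 / 2 : ℝ) * ∑ j, (uK φ θ (xt j) - y j) ^ 2

/- ### Auxiliary machinery -/

section Aux

lemma flow_deriv {ι : Type*} [Fintype ι] [DecidableEq ι]
    {L : EuclideanSpace ℝ ι → ℝ} {Θ : ℝ → EuclideanSpace ℝ ι} {D : EuclideanSpace ℝ ι →L[ℝ] ℝ}
    (hD : HasFDerivAt L D (Θ 0)) (hflow : HasDerivAt Θ (-(gradient L (Θ 0))) 0) :
    deriv (fun t => L (Θ t)) 0 = -∑ a, (D (EuclideanSpace.single a 1))^2 := by
  set g := gradient L (Θ 0) with hg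
  have hgD : ∀ v, (inner ℝ g v : ℝ) = D v := by
    intro v
    rw [hg, gradient, hD.fderiv]
    exact InnerProductSpace.toDual_symm_apply
  have hcomp : HasDerivAt (fun t => L (Θ t)) (D (-g)) 0 := hD.comp_hasDerivAt 0 hflow
  have hga : ∀ a, g a = D (EuclideanSpace.single a 1) := by
    intro a
    rw [← hgD]
    simp [EuclideanSpace.inner_single_right]
  rw [hcomp.deriv, map_neg, ← hgD g]
  congr 1
  rw [PiLp.inner_apply]
  simp only [RCLike.inner_apply, conj_trivial]
  exact Finset.sum_congr rfl fun a _ => by rw [hga a]; ring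

lemma sum_ite_zero {K : ℕ} (hK : 0 < K) (f : Fin K → ℝ) :
    ∑ k : Fin K, (if (k : ℕ) = 0 then (1 : ℝ) else 0) * f k = f ⟨0, hK⟩ := by
  rw [Finset.sum_eq_single (⟨0, hK⟩ : Fin K)]
  · simp
  · intro k _ hk
    have : ¬((k : ℕ) = 0) := fun h => hk (Fin.ext h)
    simp [this]
  · simp

variable {N d K m : ℕ}

/- FF derivative -/

def SFF (x : Fin (d + 1) → ℝ) (i : Fin N) : FFParams N d →L[ℝ] ℝ :=
  ∑ l, x l • (EuclideanSpace.proj (Sum.inr (i, l)) : FFParams N d →L[ℝ] ℝ)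

def DuFF (φ1 : ℝ → ℝ) (x : Fin (d + 1) → ℝ) (θ : FFParams N d) : FFParams N d →L[ℝ] ℝ :=
  ∑ i, (θ (Sum.inl i) • ((deriv φ1 (∑ l, θ (Sum.inr (i, l)) * x l)) • SFF x i)
       + (φ1 (∑ l, θ (Sum.inr (i, l)) * x l)) •
          (EuclideanSpace.proj (Sum.inl i) : FFParams N d →L[ℝ] ℝ))

lemma hasFDerivAt_SFF (x : Fin (d + 1) → ℝ) (i : Fin N) (θ : FFParams N d) :
    HasFDerivAt (fun θ : FFParams N d => ∑ l, θ (Sum.inr (i, l)) * x l) (SFF x i) θ := by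
  have h := (SFF (N := N) x i).hasFDerivAt (x := θ)
  have heq : (fun θ : FFParams N d => ∑ l, θ (Sum.inr (i, l)) * x l) = fun θ => SFF x i θ := by
    funext θ'
    simp [SFF, ContinuousLinearMap.sum_apply, mul_comm]
  rw [heq]
  exact h

lemma hasFDerivAt_uFF (φ1 : ℝ → ℝ) (hφ1 : ContDiff ℝ 1 φ1) (x : Fin (d + 1) → ℝ)
    (θ : FFParams N d) : HasFDerivAt (fun θ => uFF φ1 θ x) (DuFF φ1 x θ) θ := by
  unfold uFF DuFF
  apply HasFDerivAt.fun_sum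
  intro i _
  have h1 : HasFDerivAt (fun θ : FFParams N d => θ (Sum.inl i))
      (EuclideanSpace.proj (Sum.inl i) : FFParams N d →L[ℝ] ℝ) θ :=
    (EuclideanSpace.proj (Sum.inl i) : FFParams N d →L[ℝ] ℝ).hasFDerivAt
  have h2 := hasFDerivAt_SFF x i θ
  have h3 : HasDerivAt φ1 (deriv φ1 (∑ l, θ (Sum.inr (i, l)) * x l))
      (∑ l, θ (Sum.inr (i, l)) * x l) :=
    ((hφ1.differentiable one_ne_zero) _).hasDerivAt
  exact h1.mul (h3.comp_hasFDerivAt θ h2)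

def DLFF (φ1 : ℝ → ℝ) (xt : Fin m → Fin (d + 1) → ℝ) (y : Fin m → ℝ) (θ : FFParams N d) :
    FFParams N d →L[ℝ] ℝ :=
  ∑ j, (uFF φ1 θ (xt j) - y j) • DuFF φ1 (xt j) θ

lemma hasFDerivAt_sqLossFF (φ1 : ℝ → ℝ) (hφ1 : ContDiff ℝ 1 φ1)
    (xt : Fin m → Fin (d + 1) → ℝ) (y : Fin m → ℝ) (θ : FFParams N d) :
    HasFDerivAt (sqLossFF φ1 xt y) (DLFF φ1 xt y θ) θ := by
  unfold sqLossFF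
  simp only [pow_two]
  have h : ∀ j, HasFDerivAt (fun θ : FFParams N d =>
      (uFF φ1 θ (xt j) - y j) * (uFF φ1 θ (xt j) - y j))
      ((uFF φ1 θ (xt j) - y j) • DuFF φ1 (xt j) θ
        + (uFF φ1 θ (xt j) - y j) • DuFF φ1 (xt j) θ) θ := by
    intro j
    have hu := (hasFDerivAt_uFF φ1 hφ1 (xt j) θ).sub_const (y j)
    exact hu.mul hu
  have hsum := HasFDerivAt.fun_sum (fun j (_ : j ∈ Finset.univ) => h j)
  have hh := hsum.const_mul (1 / 2 : ℝ)
  refine hh.congr_fderiv ?_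
  symm
  unfold DLFF
  ext v
  simp only [ContinuousLinearMap.sum_apply, ContinuousLinearMap.smul_apply, smul_eq_mul,
    Finset.mul_sum]
  exact Finset.sum_congr rfl fun j _ => by
    simp only [ContinuousLinearMap.add_apply, ContinuousLinearMap.smul_apply, smul_eq_mul]
    ring

lemma DuFF_apply_inl (φ1 : ℝ → ℝ) (x : Fin (d + 1) → ℝ) (θ : FFParams N d) (i0 : Fin N) :
    DuFF φ1 x θ (EuclideanSpace.single (Sum.inl i0) 1)
      = φ1 (∑ l, θ (Sum.inr (i0, l)) * x l) := by
  simp [DuFF, SFF, ContinuousLinearMap.sum_apply, ContinuousLinearMap.add_apply,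
    ContinuousLinearMap.smul_apply, EuclideanSpace.single_apply, Prod.ext_iff, ite_and,
    mul_ite, ite_mul, mul_zero, zero_mul]

lemma DuFF_apply_inr (φ1 : ℝ → ℝ) (x : Fin (d + 1) → ℝ) (θ : FFParams N d) (i0 : Fin N)
    (l0 : Fin (d + 1)) :
    DuFF φ1 x θ (EuclideanSpace.single (Sum.inr (i0, l0)) 1)
      = θ (Sum.inl i0) * (deriv φ1 (∑ l, θ (Sum.inr (i0, l)) * x l) * x l0) := by
  simp [DuFF, SFF, ContinuousLinearMap.sum_apply, ContinuousLinearMap.add_apply,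
    ContinuousLinearMap.smul_apply, EuclideanSpace.single_apply, Prod.ext_iff, ite_and,
    mul_ite, ite_mul, mul_zero, zero_mul]

lemma DLFF_apply_inl (φ1 : ℝ → ℝ) (xt : Fin m → Fin (d + 1) → ℝ) (y : Fin m → ℝ)
    (θ : FFParams N d) (i0 : Fin N) :
    DLFF φ1 xt y θ (EuclideanSpace.single (Sum.inl i0) 1)
      = ∑ j, (uFF φ1 θ (xt j) - y j) * φ1 (∑ l, θ (Sum.inr (i0, l)) * xt j l) := by
  simp [DLFF, ContinuousLinearMap.sum_apply, ContinuousLinearMap.smul_apply, smul_eq_mul,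
    DuFF_apply_inl]

lemma DLFF_apply_inr (φ1 : ℝ → ℝ) (xt : Fin m → Fin (d + 1) → ℝ) (y : Fin m → ℝ)
    (θ : FFParams N d) (i0 : Fin N) (l0 : Fin (d + 1)) :
    DLFF φ1 xt y θ (EuclideanSpace.single (Sum.inr (i0, l0)) 1)
      = ∑ j, (uFF φ1 θ (xt j) - y j) *
          (θ (Sum.inl i0) * (deriv φ1 (∑ l, θ (Sum.inr (i0, l)) * xt j l) * xt j l0)) := by
  simp [DLFF, ContinuousLinearMap.sum_apply, ContinuousLinearMap.smul_apply, smul_eq_mul,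
    DuFF_apply_inr]

/- K derivative -/

def SK (x : Fin (d + 1) → ℝ) (i : Fin N) : KParams N d K →L[ℝ] ℝ :=
  ∑ l, x l • (EuclideanSpace.proj (Sum.inl (Sum.inr (i, l))) : KParams N d K →L[ℝ] ℝ)

lemma hasFDerivAt_SK (x : Fin (d + 1) → ℝ) (i : Fin N) (θ : KParams N d K) :
    HasFDerivAt (fun θ : KParams N d K => ∑ l, θ (Sum.inl (Sum.inr (i, l))) * x l)
      (SK x i) θ := by
  have h := (SK (N := N) (K := K) x i).hasFDerivAt (x := θ)
  have heq : (fun θ : KParams N d K => ∑ l, θ (Sum.inl (Sum.inr (i, l))) * x l)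
      = fun θ => SK x i θ := by
    funext θ'
    simp [SK, ContinuousLinearMap.sum_apply, mul_comm]
  rw [heq]
  exact h

def DuK (φ : Fin K → ℝ → ℝ) (x : Fin (d + 1) → ℝ) (θ : KParams N d K) :
    KParams N d K →L[ℝ] ℝ :=
  ∑ i,
    (θ (Sum.inl (Sum.inl i)) •
      ∑ k, (θ (Sum.inr (Sum.inl k)) •
              ((deriv (φ k) (θ (Sum.inr (Sum.inr k)) * ∑ l, θ (Sum.inl (Sum.inr (i, l))) * x l)) •
                (θ (Sum.inr (Sum.inr k)) • SK x i +
                  (∑ l, θ (Sum.inl (Sum.inr (i, l))) * x l) •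
                    (EuclideanSpace.proj (Sum.inr (Sum.inr k)) : KParams N d K →L[ℝ] ℝ)))
            + (φ k (θ (Sum.inr (Sum.inr k)) * ∑ l, θ (Sum.inl (Sum.inr (i, l))) * x l)) •
                (EuclideanSpace.proj (Sum.inr (Sum.inl k)) : KParams N d K →L[ℝ] ℝ))
     + (∑ k, θ (Sum.inr (Sum.inl k)) *
          φ k (θ (Sum.inr (Sum.inr k)) * ∑ l, θ (Sum.inl (Sum.inr (i, l))) * x l)) •
        (EuclideanSpace.proj (Sum.inl (Sum.inl i)) : KParams N d K →L[ℝ] ℝ))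

lemma hasFDerivAt_uK (φ : Fin K → ℝ → ℝ) (hφ : ∀ k, ContDiff ℝ 1 (φ k))
    (x : Fin (d + 1) → ℝ) (θ : KParams N d K) :
    HasFDerivAt (fun θ => uK φ θ x) (DuK φ x θ) θ := by
  unfold uK DuK
  apply HasFDerivAt.fun_sum
  intro i _
  have hS := hasFDerivAt_SK (K := K) x i θ
  have hinner : ∀ k : Fin K, HasFDerivAt
      (fun θ : KParams N d K => θ (Sum.inr (Sum.inl k)) *
        φ k (θ (Sum.inr (Sum.inr k)) * ∑ l, θ (Sum.inl (Sum.inr (i, l))) * x l))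
      (θ (Sum.inr (Sum.inl k)) •
          ((deriv (φ k) (θ (Sum.inr (Sum.inr k)) * ∑ l, θ (Sum.inl (Sum.inr (i, l))) * x l)) •
            (θ (Sum.inr (Sum.inr k)) • SK x i +
              (∑ l, θ (Sum.inl (Sum.inr (i, l))) * x l) •
                (EuclideanSpace.proj (Sum.inr (Sum.inr k)) : KParams N d K →L[ℝ] ℝ)))
        + (φ k (θ (Sum.inr (Sum.inr k)) * ∑ l, θ (Sum.inl (Sum.inr (i, l))) * x l)) •
            (EuclideanSpace.proj (Sum.inr (Sum.inl k)) : KParams N d K →L[ℝ] ℝ)) θ := by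
    intro k
    have hω : HasFDerivAt (fun θ : KParams N d K => θ (Sum.inr (Sum.inr k)))
        (EuclideanSpace.proj (Sum.inr (Sum.inr k)) : KParams N d K →L[ℝ] ℝ) θ :=
      (EuclideanSpace.proj (Sum.inr (Sum.inr k)) : KParams N d K →L[ℝ] ℝ).hasFDerivAt
    have hα : HasFDerivAt (fun θ : KParams N d K => θ (Sum.inr (Sum.inl k)))
        (EuclideanSpace.proj (Sum.inr (Sum.inl k)) : KParams N d K →L[ℝ] ℝ) θ :=
      (EuclideanSpace.proj (Sum.inr (Sum.inl k)) : KParams N d K →L[ℝ] ℝ).hasFDerivAt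
    have harg := hω.mul hS
    have hder : HasDerivAt (φ k)
        (deriv (φ k) (θ (Sum.inr (Sum.inr k)) * ∑ l, θ (Sum.inl (Sum.inr (i, l))) * x l))
        (θ (Sum.inr (Sum.inr k)) * ∑ l, θ (Sum.inl (Sum.inr (i, l))) * x l) :=
      (((hφ k).differentiable one_ne_zero) _).hasDerivAt
    exact hα.mul (hder.comp_hasFDerivAt θ harg)
  have hc : HasFDerivAt (fun θ : KParams N d K => θ (Sum.inl (Sum.inl i)))
      (EuclideanSpace.proj (Sum.inl (Sum.inl i)) : KParams N d K →L[ℝ] ℝ) θ :=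
    (EuclideanSpace.proj (Sum.inl (Sum.inl i)) : KParams N d K →L[ℝ] ℝ).hasFDerivAt
  exact hc.mul (HasFDerivAt.fun_sum (fun k (_ : k ∈ Finset.univ) => hinner k))

def DLK (φ : Fin K → ℝ → ℝ) (xt : Fin m → Fin (d + 1) → ℝ) (y : Fin m → ℝ)
    (θ : KParams N d K) : KParams N d K →L[ℝ] ℝ :=
  ∑ j, (uK φ θ (xt j) - y j) • DuK φ (xt j) θ

lemma hasFDerivAt_sqLossK (φ : Fin K → ℝ → ℝ) (hφ : ∀ k, ContDiff ℝ 1 (φ k))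
    (xt : Fin m → Fin (d + 1) → ℝ) (y : Fin m → ℝ) (θ : KParams N d K) :
    HasFDerivAt (sqLossK φ xt y) (DLK φ xt y θ) θ := by
  unfold sqLossK
  simp only [pow_two]
  have h : ∀ j, HasFDerivAt (fun θ : KParams N d K =>
      (uK φ θ (xt j) - y j) * (uK φ θ (xt j) - y j))
      ((uK φ θ (xt j) - y j) • DuK φ (xt j) θ + (uK φ θ (xt j) - y j) • DuK φ (xt j) θ) θ := by
    intro j
    have hu := (hasFDerivAt_uK φ hφ (xt j) θ).sub_const (y j)
    exact hu.mul hu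
  have hsum := HasFDerivAt.fun_sum (fun j (_ : j ∈ Finset.univ) => h j)
  have hh := hsum.const_mul (1 / 2 : ℝ)
  refine hh.congr_fderiv ?_
  symm
  unfold DLK
  ext v
  simp only [ContinuousLinearMap.sum_apply, ContinuousLinearMap.smul_apply, smul_eq_mul,
    Finset.mul_sum]
  exact Finset.sum_congr rfl fun j _ => by
    simp only [ContinuousLinearMap.add_apply, ContinuousLinearMap.smul_apply, smul_eq_mul]
    ring

lemma DuK_apply_c (φ : Fin K → ℝ → ℝ) (x : Fin (d + 1) → ℝ) (θ : KParams N d K) (i0 : Fin N) :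
    DuK φ x θ (EuclideanSpace.single (Sum.inl (Sum.inl i0)) 1)
      = ∑ k, θ (Sum.inr (Sum.inl k)) *
          φ k (θ (Sum.inr (Sum.inr k)) * ∑ l, θ (Sum.inl (Sum.inr (i0, l))) * x l) := by
  simp [DuK, SK, ContinuousLinearMap.sum_apply, ContinuousLinearMap.add_apply,
    ContinuousLinearMap.smul_apply, EuclideanSpace.single_apply, Prod.ext_iff, ite_and,
    mul_ite, ite_mul, mul_zero, zero_mul]

lemma DuK_apply_v (φ : Fin K → ℝ → ℝ) (x : Fin (d + 1) → ℝ) (θ : KParams N d K) (i0 : Fin N)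
    (l0 : Fin (d + 1)) :
    DuK φ x θ (EuclideanSpace.single (Sum.inl (Sum.inr (i0, l0))) 1)
      = θ (Sum.inl (Sum.inl i0)) * ∑ k, θ (Sum.inr (Sum.inl k)) *
          (deriv (φ k) (θ (Sum.inr (Sum.inr k)) * ∑ l, θ (Sum.inl (Sum.inr (i0, l))) * x l) *
            (θ (Sum.inr (Sum.inr k)) * x l0)) := by
  simp [DuK, SK, ContinuousLinearMap.sum_apply, ContinuousLinearMap.add_apply,
    ContinuousLinearMap.smul_apply, EuclideanSpace.single_apply, Prod.ext_iff, ite_and,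
    mul_ite, ite_mul, mul_zero, zero_mul]

lemma DuK_apply_α (φ : Fin K → ℝ → ℝ) (x : Fin (d + 1) → ℝ) (θ : KParams N d K) (k0 : Fin K) :
    DuK φ x θ (EuclideanSpace.single (Sum.inr (Sum.inl k0)) 1)
      = ∑ i, θ (Sum.inl (Sum.inl i)) *
          φ k0 (θ (Sum.inr (Sum.inr k0)) * ∑ l, θ (Sum.inl (Sum.inr (i, l))) * x l) := by
  simp [DuK, SK, ContinuousLinearMap.sum_apply, ContinuousLinearMap.add_apply,
    ContinuousLinearMap.smul_apply, EuclideanSpace.single_apply, Prod.ext_iff, ite_and,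
    mul_ite, ite_mul, mul_zero, zero_mul]

lemma DLK_apply_c (φ : Fin K → ℝ → ℝ) (xt : Fin m → Fin (d + 1) → ℝ) (y : Fin m → ℝ)
    (θ : KParams N d K) (i0 : Fin N) :
    DLK φ xt y θ (EuclideanSpace.single (Sum.inl (Sum.inl i0)) 1)
      = ∑ j, (uK φ θ (xt j) - y j) * ∑ k, θ (Sum.inr (Sum.inl k)) *
          φ k (θ (Sum.inr (Sum.inr k)) * ∑ l, θ (Sum.inl (Sum.inr (i0, l))) * xt j l) := by
  simp [DLK, ContinuousLinearMap.sum_apply, ContinuousLinearMap.smul_apply, smul_eq_mul,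
    DuK_apply_c]

lemma DLK_apply_v (φ : Fin K → ℝ → ℝ) (xt : Fin m → Fin (d + 1) → ℝ) (y : Fin m → ℝ)
    (θ : KParams N d K) (i0 : Fin N) (l0 : Fin (d + 1)) :
    DLK φ xt y θ (EuclideanSpace.single (Sum.inl (Sum.inr (i0, l0))) 1)
      = ∑ j, (uK φ θ (xt j) - y j) *
          (θ (Sum.inl (Sum.inl i0)) * ∑ k, θ (Sum.inr (Sum.inl k)) *
            (deriv (φ k) (θ (Sum.inr (Sum.inr k)) *
                ∑ l, θ (Sum.inl (Sum.inr (i0, l))) * xt j l) *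
              (θ (Sum.inr (Sum.inr k)) * xt j l0))) := by
  simp [DLK, ContinuousLinearMap.sum_apply, ContinuousLinearMap.smul_apply, smul_eq_mul,
    DuK_apply_v]

lemma DLK_apply_α (φ : Fin K → ℝ → ℝ) (xt : Fin m → Fin (d + 1) → ℝ) (y : Fin m → ℝ)
    (θ : KParams N d K) (k0 : Fin K) :
    DLK φ xt y θ (EuclideanSpace.single (Sum.inr (Sum.inl k0)) 1)
      = ∑ j, (uK φ θ (xt j) - y j) * ∑ i, θ (Sum.inl (Sum.inl i)) *
          φ k0 (θ (Sum.inr (Sum.inr k0)) * ∑ l, θ (Sum.inl (Sum.inr (i, l))) * xt j l) := by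
  simp [DLK, ContinuousLinearMap.sum_apply, ContinuousLinearMap.smul_apply, smul_eq_mul,
    DuK_apply_α]

end Aux


/-- initial loss-derivative comparison between the Kronecker and feed-forward
networks.  With common initialization `(c, V)`, `α(0) = (1, 0, …, 0)`, `ω(0) = (1, …, 1)` and
both parameter sets evolving by the gradient flows of their square losses,
`d/dt L^K(0) ≤ d/dt L^FF(0) − ‖A(0)·Res(0)‖² ≤ d/dt L^FF(0) ≤ 0`, where
`A(0)_{kj} = Σ_i c_i φ_k(v_iᵀ x̃_j)` and `Res(0)_j = u(x_j) − y_j`; and if `A(0)` has full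
rank `m` and `Res(0) ≠ 0`, then `d/dt L^K(0) < d/dt L^FF(0)`. -/
theorem initial_loss_derivative_comparison {N d K m : ℕ} (hK : 0 < K) (hKm : m ≤ K)
    (φ : Fin K → ℝ → ℝ) (hφ : ∀ k, ContDiff ℝ 1 (φ k))
    (c : Fin N → ℝ) (V : Fin N → Fin (d + 1) → ℝ)
    (xt : Fin m → Fin (d + 1) → ℝ) (y : Fin m → ℝ)
    (ΘFF : ℝ → FFParams N d) (ΘK : ℝ → KParams N d K)
    (hFFc : ∀ i, ΘFF 0 (Sum.inl i) = c i)
    (hFFv : ∀ i j, ΘFF 0 (Sum.inr (i, j)) = V i j)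
    (hKc : ∀ i, ΘK 0 (Sum.inl (Sum.inl i)) = c i)
    (hKv : ∀ i j, ΘK 0 (Sum.inl (Sum.inr (i, j))) = V i j)
    (hKα : ∀ k : Fin K, ΘK 0 (Sum.inr (Sum.inl k)) = if (k : ℕ) = 0 then 1 else 0)
    (hKω : ∀ k : Fin K, ΘK 0 (Sum.inr (Sum.inr k)) = 1)
    (hflowFF : ∀ t, HasDerivAt ΘFF
      (-(gradient (sqLossFF (φ ⟨0, hK⟩) xt y) (ΘFF t))) t)
    (hflowK : ∀ t, HasDerivAt ΘK (-(gradient (sqLossK φ xt y) (ΘK t))) t) :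
    (deriv (fun t => sqLossK φ xt y (ΘK t)) 0 ≤
        deriv (fun t => sqLossFF (φ ⟨0, hK⟩) xt y (ΘFF t)) 0 -
          ∑ k, (∑ j, (∑ i, c i * φ k (∑ l, V i l * xt j l)) *
            (uFF (φ ⟨0, hK⟩) (ΘFF 0) (xt j) - y j)) ^ 2) ∧
    deriv (fun t => sqLossFF (φ ⟨0, hK⟩) xt y (ΘFF t)) 0 ≤ 0 ∧
    ((Matrix.rank (Matrix.of fun (k : Fin K) (j : Fin m) =>
          ∑ i, c i * φ k (∑ l, V i l * xt j l)) = m ∧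
        (fun j : Fin m => uFF (φ ⟨0, hK⟩) (ΘFF 0) (xt j) - y j) ≠ 0) →
      deriv (fun t => sqLossK φ xt y (ΘK t)) 0 <
        deriv (fun t => sqLossFF (φ ⟨0, hK⟩) xt y (ΘFF t)) 0) := by
  have hφ1 : ContDiff ℝ 1 (φ ⟨0, hK⟩) := hφ _
  -- the two networks agree at time 0
  have huK : ∀ j, uK φ (ΘK 0) (xt j) = uFF (φ ⟨0, hK⟩) (ΘFF 0) (xt j) := by
    intro j
    have huFF : uFF (φ ⟨0, hK⟩) (ΘFF 0) (xt j)
        = ∑ i, c i * φ ⟨0, hK⟩ (∑ l, V i l * xt j l) := by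
      unfold uFF; simp [hFFc, hFFv]
    rw [huFF]; unfold uK
    refine Finset.sum_congr rfl fun i _ => ?_
    rw [hKc]
    congr 1
    simp only [hKα, hKω, hKv, one_mul]
    exact sum_ite_zero hK _
  -- derivative of losses along the flows
  have hDF : deriv (fun t => sqLossFF (φ ⟨0, hK⟩) xt y (ΘFF t)) 0
      = -∑ a, (DLFF (φ ⟨0, hK⟩) xt y (ΘFF 0) (EuclideanSpace.single a 1)) ^ 2 :=
    flow_deriv (hasFDerivAt_sqLossFF _ hφ1 xt y (ΘFF 0)) (hflowFF 0)
  have hDKd : deriv (fun t => sqLossK φ xt y (ΘK t)) 0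
      = -∑ a, (DLK φ xt y (ΘK 0) (EuclideanSpace.single a 1)) ^ 2 :=
    flow_deriv (hasFDerivAt_sqLossK φ hφ xt y (ΘK 0)) (hflowK 0)
  -- splitting the FF sum
  have hFFsplit : (∑ a, (DLFF (φ ⟨0, hK⟩) xt y (ΘFF 0) (EuclideanSpace.single a 1)) ^ 2)
      = (∑ i, (∑ j, (uFF (φ ⟨0, hK⟩) (ΘFF 0) (xt j) - y j) *
            φ ⟨0, hK⟩ (∑ l, V i l * xt j l)) ^ 2)
        + (∑ p : Fin N × Fin (d + 1), (∑ j, (uFF (φ ⟨0, hK⟩) (ΘFF 0) (xt j) - y j) *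
            (c p.1 * (deriv (φ ⟨0, hK⟩) (∑ l, V p.1 l * xt j l) * xt j p.2))) ^ 2) := by
    rw [Fintype.sum_sum_type]
    congr 1
    · refine Finset.sum_congr rfl fun i _ => ?_
      rw [DLFF_apply_inl]
      simp only [hFFv]
    · refine Finset.sum_congr rfl fun p _ => ?_
      obtain ⟨i, l0⟩ := p
      rw [DLFF_apply_inr]
      simp only [hFFv, hFFc]
  -- splitting the K sum
  have hKsplit : (∑ a, (DLK φ xt y (ΘK 0) (EuclideanSpace.single a 1)) ^ 2)
      = ((∑ i, (∑ j, (uFF (φ ⟨0, hK⟩) (ΘFF 0) (xt j) - y j) *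
            φ ⟨0, hK⟩ (∑ l, V i l * xt j l)) ^ 2)
        + (∑ p : Fin N × Fin (d + 1), (∑ j, (uFF (φ ⟨0, hK⟩) (ΘFF 0) (xt j) - y j) *
            (c p.1 * (deriv (φ ⟨0, hK⟩) (∑ l, V p.1 l * xt j l) * xt j p.2))) ^ 2))
        + ((∑ k, (∑ j, (∑ i, c i * φ k (∑ l, V i l * xt j l)) *
            (uFF (φ ⟨0, hK⟩) (ΘFF 0) (xt j) - y j)) ^ 2)
          + ∑ k, (DLK φ xt y (ΘK 0)
              (EuclideanSpace.single (Sum.inr (Sum.inr k)) 1)) ^ 2) := by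
    rw [Fintype.sum_sum_type, Fintype.sum_sum_type, Fintype.sum_sum_type]
    congr 1
    · congr 1
      · refine Finset.sum_congr rfl fun i _ => ?_
        rw [DLK_apply_c]
        congr 1
        refine Finset.sum_congr rfl fun j _ => ?_
        rw [huK j]
        congr 1
        simp only [hKα, hKω, hKv, one_mul]
        exact sum_ite_zero hK _
      · refine Finset.sum_congr rfl fun p _ => ?_
        obtain ⟨i, l0⟩ := p
        rw [DLK_apply_v]
        congr 1
        refine Finset.sum_congr rfl fun j _ => ?_
        rw [huK j, hKc]
        congr 1
        congr 1
        simp only [hKα, hKω, hKv, one_mul]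
        exact sum_ite_zero hK _
    · congr 1
      refine Finset.sum_congr rfl fun k _ => ?_
      rw [DLK_apply_α]
      congr 1
      refine Finset.sum_congr rfl fun j _ => ?_
      rw [huK j, mul_comm]
      congr 1
      refine Finset.sum_congr rfl fun i _ => ?_
      simp only [hKc, hKω, hKv, one_mul]
  have hW : 0 ≤ ∑ k, (DLK φ xt y (ΘK 0)
      (EuclideanSpace.single (Sum.inr (Sum.inr k)) 1)) ^ 2 :=
    Finset.sum_nonneg fun k _ => sq_nonneg _
  have hX : 0 ≤ ∑ i, (∑ j, (uFF (φ ⟨0, hK⟩) (ΘFF 0) (xt j) - y j) *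
      φ ⟨0, hK⟩ (∑ l, V i l * xt j l)) ^ 2 :=
    Finset.sum_nonneg fun i _ => sq_nonneg _
  have hY : 0 ≤ ∑ p : Fin N × Fin (d + 1), (∑ j, (uFF (φ ⟨0, hK⟩) (ΘFF 0) (xt j) - y j) *
      (c p.1 * (deriv (φ ⟨0, hK⟩) (∑ l, V p.1 l * xt j l) * xt j p.2))) ^ 2 :=
    Finset.sum_nonneg fun p _ => sq_nonneg _
  rw [hFFsplit] at hDF
  rw [hKsplit] at hDKd
  refine ⟨by rw [hDF, hDKd]; linarith, by rw [hDF]; linarith, ?_⟩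
  rintro ⟨hrank, hres⟩
  -- full rank implies A · Res ≠ 0
  set M : Matrix (Fin K) (Fin m) ℝ :=
    Matrix.of fun (k : Fin K) (j : Fin m) => ∑ i, c i * φ k (∑ l, V i l * xt j l) with hM
  set R : Fin m → ℝ := fun j => uFF (φ ⟨0, hK⟩) (ΘFF 0) (xt j) - y j with hR
  have hMR : M.mulVec R ≠ 0 := by
    intro h0
    apply hres
    have hker : R ∈ LinearMap.ker M.mulVecLin := by
      rw [LinearMap.mem_ker, Matrix.mulVecLin_apply, h0]
    have hrk : Module.finrank ℝ (LinearMap.range M.mulVecLin) = m := hrank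
    have hsum := LinearMap.finrank_range_add_finrank_ker M.mulVecLin
    rw [hrk, Module.finrank_fintype_fun_eq_card, Fintype.card_fin] at hsum
    have hker0 : Module.finrank ℝ (LinearMap.ker M.mulVecLin) = 0 := by omega
    have hbot : LinearMap.ker M.mulVecLin = ⊥ := Submodule.finrank_eq_zero.mp hker0
    rw [hbot, Submodule.mem_bot] at hker
    exact hker
  obtain ⟨k0, hk0⟩ := Function.ne_iff.mp hMR
  have hPk : ∀ k, (∑ j, (∑ i, c i * φ k (∑ l, V i l * xt j l)) *
      (uFF (φ ⟨0, hK⟩) (ΘFF 0) (xt j) - y j)) = M.mulVec R k := by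
    intro k
    simp [Matrix.mulVec, dotProduct, hM, hR]
  have hP : 0 < ∑ k, (∑ j, (∑ i, c i * φ k (∑ l, V i l * xt j l)) *
      (uFF (φ ⟨0, hK⟩) (ΘFF 0) (xt j) - y j)) ^ 2 := by
    refine Finset.sum_pos' (fun k _ => sq_nonneg _) ⟨k0, Finset.mem_univ k0, ?_⟩
    rw [hPk k0]
    have : M.mulVec R k0 ≠ 0 := hk0
    positivity
  rw [hDF, hDKd]
  linarith
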